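/- Let h be a finite-dimensional vector space (viewed as a trivial algebra) and Ω: h × h → h* a bilinear map satisfying the cyclicity condition Ω(u,v)(w) = Ω(v,w)(u) for all u,v,w ∈ h. Define on A = h ⊕ h* the product (u+f)•(v+g) := Ω(u,v) and the bilinear form B(u+f, v+g) := f(v) + g(u). Then (A, •) is a 2-step nilpotent symmetric Leibniz algebra and B is a nondegenerate symmetric invariant bilinear form on A. -/
import Mathlib


/-- The T*-extension of a trivial algebra h by a cyclic bilinear map Ω : h×h → h* is a
2-step nilpotent symmetric Leibniz algebra with a nondegenerate symmetric invariant
bilinear form. -/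
theorem Tstar_extension_trivial_algebra
    {K H : Type*} [Field K] [AddCommGroup H] [Module K H] [FiniteDimensional K H]
    (Ω : H →ₗ[K] H →ₗ[K] Module.Dual K H)
    (hcyc : ∀ u v w : H, Ω u v w = Ω v w u)
    (mul : (H × Module.Dual K H) → (H × Module.Dual K H) → (H × Module.Dual K H))
    (hmul : ∀ x y, mul x y = (0, Ω x.1 y.1))
    (Bf : (H × Module.Dual K H) → (H × Module.Dual K H) → K)
    (hB : ∀ x y, Bf x y = x.2 y.1 + y.2 x.1) :
    (∀ x y z, mul x (mul y z) = mul (mul x y) z + mul y (mul x z)) ∧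
    (∀ x y z, mul x (mul y z) = mul (mul x y) z - mul (mul x z) y) ∧
    (∀ x y z, mul (mul x y) z = 0 ∧ mul x (mul y z) = 0) ∧
    (∀ x y, Bf x y = Bf y x) ∧
    (∀ x, (∀ y, Bf x y = 0) → x = 0) ∧
    (∀ x y z, Bf (mul x y) z = Bf x (mul y z)) := by
  have h2 : ∀ x y z, mul (mul x y) z = 0 ∧ mul x (mul y z) = 0 := by
    intro x y z
    constructor <;> simp [hmul]
  refine ⟨?_, ?_, h2, ?_, ?_, ?_⟩
  · intro x y z
    rw [(h2 x y z).2, (h2 x y z).1, (h2 y x z).2, add_zero]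
  · intro x y z
    rw [(h2 x y z).2, (h2 x y z).1, (h2 x z y).1, sub_zero]
  · intro x y
    rw [hB, hB, add_comm]
  · intro x hx
    have hf : x.2 = 0 := by
      ext v
      have := hx (v, 0)
      simpa [hB] using this
    have hv : x.1 = 0 := by
      rw [← Module.forall_dual_apply_eq_zero_iff K x.1]
      intro g
      have := hx (0, g)
      simpa [hB] using this
    exact Prod.ext hv hf
  · intro x y z
    rw [hB, hB, hmul, hmul]
    simp [hcyc x.1 y.1 z.1]
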